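/- Let G be a graph on n vertices with m edges and a vertex v of degree n-1 with neighbors v_1, ..., v_{n-1}. Given any assignment of distinct labels 1,...,m-n+1 to the edges not incident with v, order the neighbors so that their partial sums w'(v_1) ≤ ... ≤ w'(v_{n-1}) are nondecreasing, and assign label m-n+1+i to edge (v, v_i). Then the resulting vertex sums w(v_i) = w'(v_i) + m - n + 1 + i are strictly increasing in i, and w(v) = (n-1)(m-n+1) + n(n-1)/2 exceeds every w(v_i). -/

import Mathlib

/-- Lemma 4.1 construction: with `v` of degree `n-1`, labels `1,…,m-n+1` placed
bijectively on the edges not incident with `v`, partial sums `w'` of the neighbors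
`u 0, …, u (n-2)` nondecreasing, and label `m-n+1+(i+1)` placed on the edge
`(v, u i)`, the resulting total sums `w (u i) = w' (u i) + (m-n+1) + (i+1)` are
strictly increasing, and `w v = (n-1)(m-n+1) + n(n-1)/2` exceeds all of them. -/
theorem stmt17 {V : Type*} [Fintype V] [DecidableEq V] (G : SimpleGraph V)
    [DecidableRel G.Adj] (n m : ℕ) (hn : n = Fintype.card V) (hn2 : 2 ≤ n)
    (hm : m = G.edgeFinset.card)
    (v : V) (hv : G.degree v = n - 1)
    (f₀ : Sym2 V → ℕ)
    (hbij : Set.BijOn f₀ ↑(G.edgeFinset.filter (fun e => v ∉ e))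
      ↑(Finset.Icc 1 (m - n + 1)))
    (u : Fin (n - 1) → V) (huinj : Function.Injective u)
    (huv : ∀ i, G.Adj v (u i))
    (hmono : Monotone (fun i : Fin (n - 1) =>
      ∑ e ∈ (G.incidenceFinset (u i)).filter (fun e => v ∉ e), f₀ e)) :
    StrictMono (fun i : Fin (n - 1) =>
      (∑ e ∈ (G.incidenceFinset (u i)).filter (fun e => v ∉ e), f₀ e) +
        (m - n + 1) + (i.val + 1)) ∧
    ∀ i : Fin (n - 1),
      (∑ e ∈ (G.incidenceFinset (u i)).filter (fun e => v ∉ e), f₀ e) +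
          (m - n + 1) + (i.val + 1) <
        (n - 1) * (m - n + 1) + n * (n - 1) / 2 := by
  have hstrict : StrictMono (fun i : Fin (n - 1) =>
      (∑ e ∈ (G.incidenceFinset (u i)).filter (fun e => v ∉ e), f₀ e) +
        (m - n + 1) + (i.val + 1)) := by
    intro i j hij
    have h1 := hmono hij.le
    have h2 : i.val < j.val := hij
    simp only at h1 ⊢
    omega
  refine ⟨hstrict, fun i => ?_⟩
  -- n = 2 is impossible unless hbij gives a contradiction
  rcases Nat.lt_or_ge n 3 with hn3 | hn3
  · -- n = 2 : there are no edges avoiding v, but Icc 1 (m-n+1) is nonempty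
    interval_cases n
    exfalso
    have hcardV : Fintype.card V = 2 := hn.symm
    have hempty : (G.edgeFinset.filter (fun e => v ∉ e)) = ∅ := by
      rw [Finset.filter_eq_empty_iff]
      intro e he
      simp only [Decidable.not_not]
      rw [SimpleGraph.mem_edgeFinset] at he
      induction e with
      | h a b =>
        have hab : G.Adj a b := he
        by_contra hc
        simp only [Sym2.mem_iff, not_or] at hc
        have : 3 ≤ Fintype.card V := by
          have : ({v, a, b} : Finset V).card = 3 := by
            rw [Finset.card_insert_of_notMem (by simp [hc.1, hc.2]),
              Finset.card_insert_of_notMem (by simp [hab.ne])]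
            simp
          calc 3 = ({v, a, b} : Finset V).card := this.symm
            _ ≤ Fintype.card V := Finset.card_le_card (Finset.subset_univ _) |>.trans
                (by simp [Finset.card_univ])
        omega
    have h1 : (1 : ℕ) ∈ (Finset.Icc 1 (m - 2 + 1) : Finset ℕ) := by
      simp
    obtain ⟨e, he, -⟩ := hbij.surjOn h1
    rw [hempty] at he
    simp at he
  · -- main case n ≥ 3
    set S := (G.incidenceFinset (u i)).filter (fun e => v ∉ e) with hS
    have hSsub : S ⊆ G.edgeFinset.filter (fun e => v ∉ e) := by
      intro e he
      rw [hS, Finset.mem_filter] at he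
      rw [Finset.mem_filter]
      have h1 := he.1
      rw [SimpleGraph.mem_incidenceFinset] at h1
      exact ⟨SimpleGraph.mem_edgeFinset.mpr h1.1, he.2⟩
    have hle : ∀ e ∈ S, f₀ e ≤ m - n + 1 := by
      intro e he
      have := hbij.mapsTo (hSsub he)
      simp only [Finset.coe_Icc, Set.mem_Icc] at this
      exact this.2
    -- card bound : S ⊆ incidenceFinset (u i) \ {s(v, u i)}
    have hmem : s(v, u i) ∈ G.incidenceFinset (u i) := by
      rw [SimpleGraph.mem_incidenceFinset]
      exact ⟨(G.mem_edgeSet).mpr (huv i), by simp⟩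
    have hcard : S.card ≤ n - 2 := by
      have h1 : S ⊆ (G.incidenceFinset (u i)).erase s(v, u i) := by
        intro e he
        rw [hS, Finset.mem_filter] at he
        refine Finset.mem_erase.mpr ⟨?_, he.1⟩
        rintro rfl
        exact he.2 (by simp)
      have h2 : ((G.incidenceFinset (u i)).erase s(v, u i)).card =
          G.degree (u i) - 1 := by
        rw [Finset.card_erase_of_mem hmem, SimpleGraph.card_incidenceFinset_eq_degree]
      have h3 : G.degree (u i) ≤ n - 1 := by
        rw [hn]
        have := SimpleGraph.degree_lt_card_verts (G := G) (u i)
        omega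
      have := Finset.card_le_card h1
      omega
    have hsum : ∑ e ∈ S, f₀ e ≤ (n - 2) * (m - n + 1) := by
      calc ∑ e ∈ S, f₀ e ≤ S.card * (m - n + 1) :=
            Finset.sum_le_card_nsmul S f₀ (m - n + 1) hle
        _ ≤ (n - 2) * (m - n + 1) := Nat.mul_le_mul_right _ hcard
    have hi : i.val + 1 ≤ n - 1 := i.2
    have hdiv : n - 1 < n * (n - 1) / 2 := by
      have h2 : 2 * (n - 1) + 2 ≤ n * (n - 1) := by
        obtain ⟨k, rfl⟩ := Nat.exists_eq_add_of_le hn3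
        have : 3 + k - 1 = k + 2 := by omega
        rw [this]
        nlinarith
      have := Nat.le_div_iff_mul_le (k := 2) (by norm_num) |>.mpr
        (show ((n - 1) + 1) * 2 ≤ n * (n - 1) by omega)
      omega
    have hfact : (n - 2) * (m - n + 1) + (m - n + 1) = (n - 1) * (m - n + 1) := by
      have : n - 2 + 1 = n - 1 := by omega
      rw [← this, Nat.succ_mul]
    omega
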